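/- For m a positive integer and any x ∈ ℝ^n with x ≠ 0, the form G_{2m}(x) is strictly positive. -/
import Mathlib

open Finset

lemma gasp_key (m : ℕ) (a b : ℝ) :
    (∑ r ∈ Finset.range (2 * m + 1), (-1 : ℝ) ^ r * a ^ r * b ^ (2 * m - r)) * (a + b)
      = a ^ (2 * m + 1) + b ^ (2 * m + 1) := by
  have h := geom_sum₂_mul (-a) b (2 * m + 1)
  have h2 : (∑ i ∈ Finset.range (2 * m + 1), (-a) ^ i * b ^ (2 * m + 1 - 1 - i))
      = ∑ r ∈ Finset.range (2 * m + 1), (-1 : ℝ) ^ r * a ^ r * b ^ (2 * m - r) := by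
    refine Finset.sum_congr rfl fun r hr => ?_
    have : 2 * m + 1 - 1 - r = 2 * m - r := by omega
    rw [this, neg_pow a]
  rw [h2] at h
  have h3 : (-a) ^ (2 * m + 1) = -a ^ (2 * m + 1) := Odd.neg_pow (by exact odd_two_mul_add_one m) a
  rw [h3] at h
  nlinarith [h]

lemma gasp_nonneg (m : ℕ) (a b : ℝ) :
    0 ≤ ∑ r ∈ Finset.range (2 * m + 1), (-1 : ℝ) ^ r * a ^ r * b ^ (2 * m - r) := by
  by_cases hab : a + b = 0
  · have hb : b = -a := by linarith
    subst hb
    have hterm : ∀ r ∈ Finset.range (2 * m + 1),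
        (-1 : ℝ) ^ r * a ^ r * (-a) ^ (2 * m - r) = a ^ (2 * m) := by
      intro r hr
      have hr' : r ≤ 2 * m := Nat.lt_succ_iff.mp (Finset.mem_range.mp hr)
      rw [neg_pow a, show (-1 : ℝ) ^ r * a ^ r * ((-1) ^ (2 * m - r) * a ^ (2 * m - r))
        = ((-1) ^ r * (-1) ^ (2 * m - r)) * (a ^ r * a ^ (2 * m - r)) by ring,
        ← pow_add, ← pow_add, Nat.add_sub_cancel' hr']
      simp [Even.neg_one_pow (even_two_mul m)]
    rw [Finset.sum_congr rfl hterm, Finset.sum_const, Finset.card_range]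
    simp only [nsmul_eq_mul]
    have : (0:ℝ) ≤ a ^ (2 * m) := (even_two_mul m).pow_nonneg a
    positivity
  · set F := ∑ r ∈ Finset.range (2 * m + 1), (-1 : ℝ) ^ r * a ^ r * b ^ (2 * m - r) with hF
    have key := gasp_key m a b
    have hodd : Odd (2 * m + 1) := odd_two_mul_add_one m
    rcases lt_or_gt_of_ne hab with h1 | h1
    · have h2 : a < -b := by linarith
      have h3 : a ^ (2 * m + 1) < (-b) ^ (2 * m + 1) := hodd.strictMono_pow h2
      rw [hodd.neg_pow] at h3
      nlinarith [key, h3, h1]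
    · have h2 : -b < a := by linarith
      have h3 : (-b) ^ (2 * m + 1) < a ^ (2 * m + 1) := hodd.strictMono_pow h2
      rw [hodd.neg_pow] at h3
      nlinarith [key, h3, h1]

lemma gasp_diag (m : ℕ) (a : ℝ) (ha : a ≠ 0) :
    0 < ∑ r ∈ Finset.range (2 * m + 1), (-1 : ℝ) ^ r * a ^ r * a ^ (2 * m - r) := by
  have hterm : ∀ r ∈ Finset.range (2 * m + 1),
      (-1 : ℝ) ^ r * a ^ r * a ^ (2 * m - r) = (-1 : ℝ) ^ r * a ^ (2 * m) := by
    intro r hr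
    have hr' : r ≤ 2 * m := Nat.lt_succ_iff.mp (Finset.mem_range.mp hr)
    rw [mul_assoc, ← pow_add, Nat.add_sub_cancel' hr']
  rw [Finset.sum_congr rfl hterm, ← Finset.sum_mul, neg_one_geom_sum]
  have : ¬ Even (2 * m + 1) := by simp [Nat.even_add_one, even_two_mul]
  rw [if_neg this, one_mul]
  exact (even_two_mul m).pow_pos ha

theorem gasparyan_pos (m n : ℕ) (hm : 1 ≤ m) (x : Fin n → ℝ) (hx : x ≠ 0) :
    0 < ∑ r ∈ Finset.range (2 * m + 1),
      (-1 : ℝ) ^ r * (∑ k, x k ^ r) * (∑ k, x k ^ (2 * m - r)) := by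
  obtain ⟨k0, hk0⟩ : ∃ k, x k ≠ 0 := Function.ne_iff.mp hx
  have key1 : (∑ r ∈ Finset.range (2 * m + 1),
        (-1 : ℝ) ^ r * (∑ k, x k ^ r) * (∑ k, x k ^ (2 * m - r)))
      = ∑ r ∈ Finset.range (2 * m + 1), ∑ j, ∑ k,
          (-1 : ℝ) ^ r * x j ^ r * x k ^ (2 * m - r) := by
    refine Finset.sum_congr rfl fun r _ => ?_
    rw [mul_assoc, Finset.sum_mul_sum, Finset.mul_sum]
    refine Finset.sum_congr rfl fun j _ => ?_
    rw [Finset.mul_sum]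
    refine Finset.sum_congr rfl fun k _ => ?_
    ring
  have key2 : (∑ j : Fin n, ∑ r ∈ Finset.range (2 * m + 1), ∑ k,
          (-1 : ℝ) ^ r * x j ^ r * x k ^ (2 * m - r))
      = ∑ j : Fin n, ∑ k, ∑ r ∈ Finset.range (2 * m + 1),
          (-1 : ℝ) ^ r * x j ^ r * x k ^ (2 * m - r) :=
    Finset.sum_congr rfl fun j _ => Finset.sum_comm
  rw [key1, Finset.sum_comm, key2]
  refine Finset.sum_pos' (fun j _ => Finset.sum_nonneg fun k _ => gasp_nonneg m _ _)
    ⟨k0, Finset.mem_univ _, ?_⟩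
  refine Finset.sum_pos' (fun k _ => gasp_nonneg m _ _) ⟨k0, Finset.mem_univ _, ?_⟩
  exact gasp_diag m (x k0) hk0
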